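/- Let E be a directed graph with finitely many vertices. The map η ↦ closure of the hereditary set generated by the union of η (that is, η ↦ saturation of H(∪η)) is an order isomorphism from the lattice of hereditary subsets of the component poset Γ_E (ordered by inclusion) onto the lattice of saturated hereditary subsets of E⁰ (ordered by inclusion). -/

import Mathlib

/-- The one-step edge relation of a directed graph. -/
def gStep {V E : Type} (s r : E → V) : V → V → Prop :=
  fun x y => ∃ e : E, s e = x ∧ r e = y

/-- `u ≥ v`: there is a (possibly empty) path from `u` to `v`. -/
def gReach {V E : Type} (s r : E → V) : V → V → Prop :=
  Relation.ReflTransGen (gStep s r)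

/-- A hereditary subset of vertices: closed under `≥`-successors. -/
def gHereditary {V E : Type} (s r : E → V) (H : Set V) : Prop :=
  ∀ u ∈ H, ∀ v : V, gReach s r u v → v ∈ H

/-- A regular vertex: it emits finitely many and at least one edge. -/
def gRegular {V E : Type} (s r : E → V) (v : V) : Prop :=
  {e : E | s e = v}.Finite ∧ {e : E | s e = v}.Nonempty

/-- A saturated subset of vertices: every regular vertex all of whose outgoing
edges end in `H` belongs to `H`. -/
def gSaturated {V E : Type} (s r : E → V) (H : Set V) : Prop :=
  ∀ v : V, gRegular s r v → (∀ e : E, s e = v → r e ∈ H) → v ∈ H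

/-- The hereditary subset `H(S)` generated by `S`. -/
def gHer {V E : Type} (s r : E → V) (S : Set V) : Set V :=
  {v : V | ∃ u ∈ S, gReach s r u v}

/-- The saturation of a set: the smallest saturated set containing it. -/
def gSat {V E : Type} (s r : E → V) (S : Set V) : Set V :=
  ⋂₀ {H : Set V | gSaturated s r H ∧ S ⊆ H}

/-- A strongly connected set: nonempty, and any two of its vertices are joined
by a nonempty path. -/
def gStronglyConnectedSet {V E : Type} (s r : E → V) (S : Set V) : Prop :=
  S.Nonempty ∧ ∀ u ∈ S, ∀ v ∈ S, Relation.TransGen (gStep s r) u v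

/-- A maximal strongly connected set. -/
def gMaxSCC {V E : Type} (s r : E → V) (S : Set V) : Prop :=
  gStronglyConnectedSet s r S ∧
    ∀ T : Set V, gStronglyConnectedSet s r T → S ⊆ T → S = T

/-- The components `Γ_E`: all maximal strongly connected sets together with the
singletons of singular vertices not based on a cycle. -/
def gGamma {V E : Type} (s r : E → V) : Set (Set V) :=
  {S | gMaxSCC s r S} ∪
    {S | ∃ v : V, S = {v} ∧ ¬ gRegular s r v ∧ ¬ Relation.TransGen (gStep s r) v v}

/-- The order on components: `γ₁ ≥ γ₂` iff some vertex of `γ₁` reaches some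
vertex of `γ₂`. -/
def gGammaGE {V E : Type} (s r : E → V) (γ₁ γ₂ : Set V) : Prop :=
  ∃ v₁ ∈ γ₁, ∃ v₂ ∈ γ₂, gReach s r v₁ v₂

/-- A hereditary subset of the component poset `Γ_E`. -/
def gGammaHereditary {V E : Type} (s r : E → V) (σ : Set (Set V)) : Prop :=
  ∀ γ₁ ∈ σ, ∀ γ₂ ∈ gGamma s r, gGammaGE s r γ₁ γ₂ → γ₂ ∈ σ

/-- The map `η ↦ saturation of H(∪η)` from subsets of `Γ_E` to subsets of
`E⁰`. -/
def gPhi {V E : Type} (s r : E → V) (σ : Set (Set V)) : Set V :=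
  gSat s r (gHer s r (⋃₀ σ))


section Aux

variable {V E : Type} (s r : E → V)

lemma gHer.hereditary (S : Set V) : gHereditary s r (gHer s r S) := by
  rintro u ⟨w, hw, hwu⟩ v huv
  exact ⟨w, hw, hwu.trans huv⟩

lemma gHer.subset (S : Set V) : S ⊆ gHer s r S :=
  fun v hv => ⟨v, hv, Relation.ReflTransGen.refl⟩

lemma gHer.mono {S T : Set V} (h : S ⊆ T) : gHer s r S ⊆ gHer s r T := by
  rintro v ⟨u, hu, huv⟩; exact ⟨u, h hu, huv⟩

lemma gHer.min {S H : Set V} (hH : gHereditary s r H) (hSH : S ⊆ H) :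
    gHer s r S ⊆ H := by
  rintro v ⟨u, hu, huv⟩; exact hH u (hSH hu) v huv

lemma gSat.subset (S : Set V) : S ⊆ gSat s r S := by
  intro v hv
  rw [gSat, Set.mem_sInter]
  rintro H ⟨-, hSH⟩; exact hSH hv

lemma gSat.saturated (S : Set V) : gSaturated s r (gSat s r S) := by
  intro v hreg h
  rw [gSat, Set.mem_sInter]
  rintro H hH
  exact hH.1 v hreg fun e he => by
    have := h e he
    rw [gSat, Set.mem_sInter] at this
    exact this H hH

lemma gSat.min {S H : Set V} (hH : gSaturated s r H) (hSH : S ⊆ H) :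
    gSat s r S ⊆ H := by
  intro v hv
  rw [gSat, Set.mem_sInter] at hv
  exact hv H ⟨hH, hSH⟩

lemma gSat.mono {S T : Set V} (h : S ⊆ T) : gSat s r S ⊆ gSat s r T :=
  gSat.min s r (gSat.saturated s r T) (h.trans (gSat.subset s r T))

/-- The saturation of a hereditary set is hereditary. -/
lemma gSat.hereditary {H : Set V} (hH : gHereditary s r H) :
    gHereditary s r (gSat s r H) := by
  set X := gSat s r H with hX
  set K : Set V := {v | ∀ w, gReach s r v w → w ∈ X} with hK
  have hKsat : gSaturated s r K := by
    intro v hreg h w hvw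
    rcases hvw.cases_head with rfl | ⟨c, ⟨e, hse, hre⟩, hcw⟩
    · exact gSat.saturated s r H v hreg fun e he =>
        (h e he) (r e) Relation.ReflTransGen.refl
    · exact h e hse w (hre ▸ hcw)
  have hHK : H ⊆ K := fun u hu w huw => gSat.subset s r H (hH u hu w huw)
  have hXK : X ⊆ K := gSat.min s r hKsat hHK
  intro u hu w huw
  exact hXK hu w huw

/-- A vertex of the saturation of a hereditary set that is singular or lies on
a cycle already lies in the set. -/
lemma gSat.singular_or_cycle {W : Set V} (hW : gHereditary s r W) {v : V}
    (hv : v ∈ gSat s r W)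
    (h : ¬ gRegular s r v ∨ Relation.TransGen (gStep s r) v v) : v ∈ W := by
  set Y := W ∪ {u | gRegular s r u ∧ ¬ Relation.TransGen (gStep s r) u u} with hY
  have hYsat : gSaturated s r Y := by
    intro u hreg hu
    by_cases hc : Relation.TransGen (gStep s r) u u
    · obtain ⟨c, ⟨e, hse, hre⟩, hcu⟩ := Relation.TransGen.head'_iff.mp hc
      rcases hu e hse with hw | ⟨-, hnc⟩
      · exact Or.inl (hW _ hw u (hre ▸ hcu))
      · exact absurd (Relation.TransGen.tail' (hre ▸ hcu) ⟨e, hse, rfl⟩) hnc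
    · exact Or.inr ⟨hreg, hc⟩
  have hsub : gSat s r W ⊆ Y := gSat.min s r hYsat Set.subset_union_left
  rcases hsub hv with h1 | ⟨hreg, hnc⟩
  · exact h1
  · rcases h with h' | h'
    · exact absurd hreg h'
    · exact absurd h' hnc

/-- Every strongly connected set extends to a maximal one (finitely many
vertices). -/
lemma exists_maxSCC [Fintype V] {S : Set V} (hS : gStronglyConnectedSet s r S) :
    ∃ T, gMaxSCC s r T ∧ S ⊆ T := by
  set F := {T : Set V | gStronglyConnectedSet s r T ∧ S ⊆ T} with hF
  obtain ⟨T, hT, hmax⟩ :=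
    Set.Finite.exists_maximalFor id F (Set.toFinite F) ⟨S, hS, subset_rfl⟩
  refine ⟨T, ⟨hT.1, fun T' hT' hTT' => ?_⟩, hT.2⟩
  exact hTT'.antisymm (hmax ⟨hT', hT.2.trans hTT'⟩ hTT')

/-- A vertex on a cycle lies in a maximal strongly connected component. -/
lemma cycle_mem_maxSCC [Fintype V] {v : V}
    (hc : Relation.TransGen (gStep s r) v v) :
    ∃ T, gMaxSCC s r T ∧ v ∈ T := by
  set S : Set V := {w | gReach s r v w ∧ gReach s r w v} with hS
  have hSc : gStronglyConnectedSet s r S := by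
    refine ⟨⟨v, Relation.ReflTransGen.refl, Relation.ReflTransGen.refl⟩, ?_⟩
    rintro u ⟨-, huv⟩ w ⟨hvw, -⟩
    exact Relation.TransGen.trans_left (Relation.TransGen.trans_right huv hc) hvw
  obtain ⟨T, hT, hST⟩ := exists_maxSCC s r hSc
  exact ⟨T, hT, hST ⟨Relation.ReflTransGen.refl, Relation.ReflTransGen.refl⟩⟩

/-- A component meeting a hereditary set is contained in it. -/
lemma component_subset {γ H : Set V} (hγ : γ ∈ gGamma s r)
    (hH : gHereditary s r H) {v : V} (hv : v ∈ γ) (hvH : v ∈ H) : γ ⊆ H := by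
  rcases hγ with hγ | ⟨u, rfl, -, -⟩
  · intro w hw
    exact hH v hvH w (hγ.1.2 v hv w hw).to_reflTransGen
  · rintro w rfl
    exact hv ▸ hvH

/-- Every vertex of a component is singular or lies on a cycle. -/
lemma component_vertex {γ : Set V} (hγ : γ ∈ gGamma s r) {v : V} (hv : v ∈ γ) :
    ¬ gRegular s r v ∨ Relation.TransGen (gStep s r) v v := by
  rcases hγ with hγ | ⟨u, rfl, hreg, -⟩
  · exact Or.inr (hγ.1.2 v hv v hv)
  · exact Or.inl (hv ▸ hreg)

end Aux

/-- For a graph with finitely many vertices, `η ↦ closure(H(∪η))` is an order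
isomorphism from the lattice of hereditary subsets of the component poset
`Γ_E` onto the lattice of saturated hereditary subsets of `E⁰`. -/

theorem stmt_17 (V E : Type) [Fintype V] (s r : E → V) :
    (∀ σ : Set (Set V), σ ⊆ gGamma s r → gGammaHereditary s r σ →
      gHereditary s r (gPhi s r σ) ∧ gSaturated s r (gPhi s r σ)) ∧
    (∀ H : Set V, gHereditary s r H → gSaturated s r H →
      ∃ σ : Set (Set V), σ ⊆ gGamma s r ∧ gGammaHereditary s r σ ∧ gPhi s r σ = H) ∧
    (∀ σ₁ σ₂ : Set (Set V),
      σ₁ ⊆ gGamma s r → gGammaHereditary s r σ₁ →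
      σ₂ ⊆ gGamma s r → gGammaHereditary s r σ₂ →
      (σ₁ ⊆ σ₂ ↔ gPhi s r σ₁ ⊆ gPhi s r σ₂)) := by
  classical
  have phi_her : ∀ σ : Set (Set V), gHereditary s r (gPhi s r σ) := fun σ =>
    gSat.hereditary s r (gHer.hereditary s r _)
  have phi_sat : ∀ σ : Set (Set V), gSaturated s r (gPhi s r σ) := fun σ =>
    gSat.saturated s r _
  -- membership criterion: a component vertex in `gPhi σ` forces the component
  -- into `σ`
  have key : ∀ (σ : Set (Set V)), σ ⊆ gGamma s r → gGammaHereditary s r σ →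
      ∀ γ ∈ gGamma s r, ∀ v ∈ γ, v ∈ gPhi s r σ → γ ∈ σ := by
    intro σ hσΓ hσher γ hγ v hvγ hvφ
    have hvW : v ∈ gHer s r (⋃₀ σ) :=
      gSat.singular_or_cycle s r (gHer.hereditary s r _) hvφ
        (component_vertex s r hγ hvγ)
    obtain ⟨u, hu, huv⟩ := hvW
    obtain ⟨γ', hγ'σ, huγ'⟩ := hu
    exact hσher γ' hγ'σ γ hγ ⟨u, huγ', v, hvγ, huv⟩
  have comp_nonempty : ∀ γ ∈ gGamma s r, γ.Nonempty := by
    rintro γ (hγ | ⟨u, rfl, -, -⟩)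
    · exact hγ.1.1
    · exact ⟨u, rfl⟩
  have mem_phi : ∀ (σ : Set (Set V)) (γ : Set V), γ ∈ σ → ∀ v ∈ γ,
      v ∈ gPhi s r σ := by
    intro σ γ hγσ v hvγ
    exact gSat.subset s r _ (gHer.subset s r _ ⟨γ, hγσ, hvγ⟩)
  refine ⟨fun σ _ _ => ⟨phi_her σ, phi_sat σ⟩, ?_, ?_⟩
  · -- surjectivity
    intro H hHher hHsat
    set σ : Set (Set V) := {γ | γ ∈ gGamma s r ∧ γ ⊆ H} with hσ
    have hσΓ : σ ⊆ gGamma s r := fun γ hγ => hγ.1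
    have hσher : gGammaHereditary s r σ := by
      rintro γ₁ ⟨hγ₁Γ, hγ₁H⟩ γ₂ hγ₂Γ ⟨v₁, hv₁, v₂, hv₂, h12⟩
      exact ⟨hγ₂Γ, component_subset s r hγ₂Γ hHher hv₂
        (hHher v₁ (hγ₁H hv₁) v₂ h12)⟩
    refine ⟨σ, hσΓ, hσher, ?_⟩
    set X := gPhi s r σ with hX
    have hXH : X ⊆ H := by
      refine gSat.min s r hHsat (gHer.min s r hHher ?_)
      rintro v ⟨γ, hγσ, hvγ⟩
      exact hγσ.2 hvγ
    have hHX : H ⊆ X := by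
      -- every vertex of `H` that is singular or on a cycle is in `X`
      have sing : ∀ v ∈ H, (¬ gRegular s r v ∨
          Relation.TransGen (gStep s r) v v) → v ∈ X := by
        intro v hvH hv
        by_cases hc : Relation.TransGen (gStep s r) v v
        · obtain ⟨T, hT, hvT⟩ := cycle_mem_maxSCC s r hc
          have : T ∈ σ := ⟨Or.inl hT,
            component_subset s r (Or.inl hT) hHher hvT hvH⟩
          exact mem_phi σ T this v hvT
        · rcases hv with hreg | hc'
          · have : ({v} : Set V) ∈ σ := ⟨Or.inr ⟨v, rfl, hreg, hc⟩,
              Set.singleton_subset_iff.mpr hvH⟩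
            exact mem_phi σ {v} this v rfl
          · exact absurd hc' hc
      set B : Set V := H \ X with hB
      -- every element of `B` steps to another element of `B`
      have bstep : ∀ v ∈ B, ∃ w ∈ B, gStep s r v w := by
        rintro v ⟨hvH, hvX⟩
        have hreg : gRegular s r v := by
          by_contra hreg
          exact hvX (sing v hvH (Or.inl hreg))
        by_contra hno
        push_neg at hno
        refine hvX (phi_sat σ v hreg fun e he => ?_)
        by_contra hre
        exact hno (r e) ⟨hHher v hvH (r e)
          (Relation.ReflTransGen.single ⟨e, he, rfl⟩), hre⟩ ⟨e, he, rfl⟩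
      have bnocycle : ∀ v ∈ B, ¬ Relation.TransGen (gStep s r) v v := by
        rintro v ⟨hvH, hvX⟩ hc
        exact hvX (sing v hvH (Or.inr hc))
      have hBempty : B = ∅ := by
        by_contra hne
        obtain ⟨v₀, hv₀⟩ := Set.nonempty_iff_ne_empty.mpr hne
        set g : V → V := fun v =>
          if h : v ∈ B then (bstep v h).choose else v with hg
        have hgB : ∀ v ∈ B, g v ∈ B ∧ gStep s r v (g v) := by
          intro v hv
          simp only [hg, dif_pos hv]
          exact ⟨(bstep v hv).choose_spec.1, (bstep v hv).choose_spec.2⟩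
        set f : ℕ → V := fun n => g^[n] v₀ with hf
        have hfB : ∀ n, f n ∈ B := by
          intro n
          induction n with
          | zero => exact hv₀
          | succ k ih =>
              have : f (k + 1) = g (f k) := Function.iterate_succ_apply' g k v₀
              rw [this]
              exact (hgB (f k) ih).1
        have hfstep : ∀ n, gStep s r (f n) (f (n + 1)) := by
          intro n
          have : f (n + 1) = g (f n) := Function.iterate_succ_apply' g n v₀
          rw [this]
          exact (hgB (f n) (hfB n)).2
        have htrans : ∀ m n, m < n → Relation.TransGen (gStep s r) (f m) (f n) := by
          intro m n hmn
          induction n with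
          | zero => omega
          | succ k ih =>
              rcases Nat.lt_succ_iff_lt_or_eq.mp hmn with h | rfl
              · exact (ih h).tail (hfstep k)
              · exact Relation.TransGen.single (hfstep m)
        obtain ⟨a, b, hab, hfab⟩ := Finite.exists_ne_map_eq_of_infinite f
        rcases hab.lt_or_gt with h | h
        · exact bnocycle (f a) (hfB a) (hfab ▸ htrans a b h)
        · exact bnocycle (f b) (hfB b) (hfab.symm ▸ htrans b a h)
      intro v hvH
      by_contra hvX
      have : v ∈ B := ⟨hvH, hvX⟩
      rw [hBempty] at this
      exact this
    exact Set.Subset.antisymm hXH hHX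
  · -- order embedding
    intro σ₁ σ₂ hσ₁Γ hσ₁her hσ₂Γ hσ₂her
    constructor
    · intro h
      exact gSat.mono s r (gHer.mono s r (Set.sUnion_subset_sUnion h))
    · intro h γ hγσ₁
      obtain ⟨v, hvγ⟩ := comp_nonempty γ (hσ₁Γ hγσ₁)
      exact key σ₂ hσ₂Γ hσ₂her γ (hσ₁Γ hγσ₁) v hvγ (h (mem_phi σ₁ γ hγσ₁ v hvγ))
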